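/- arXiv:2508.15580 — 7 statements merged into one kernel-verified Lean document; each statement's English description precedes it below -/
import Mathlib

section
/- For every n ≥ 1, every 1 ≤ n0 < n, and all n-bit strings x and y: if D_n(x,y) < 2^(n−n0), then D_{n0}(P[x,n0], P[y,n0]) ≤ 1. -/
/-- Distance `D_n(x,y) = min(|x-y|, 2^n - |x-y|)` on n-bit strings (as naturals < 2^n). -/
def D (n x y : ℕ) : ℤ := min |(x : ℤ) - (y : ℤ)| (2 ^ n - |(x : ℤ) - (y : ℤ)|)

/-- Wrap-around addition `x +_n c`: the unique natural in [0, 2^n) congruent to x + c mod 2^n. -/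
def wadd (n : ℕ) (x : ℕ) (c : ℤ) : ℕ := (((x : ℤ) + c) % (2 ^ n : ℤ)).toNat

/-- `P[x,k]`: the k-bit prefix of the n-bit string x. -/
def pre (n k x : ℕ) : ℕ := x / 2 ^ (n - k)

/-- `S[x,k]`: the k-bit suffix of x. -/
def suf (k x : ℕ) : ℕ := x % 2 ^ k

/-- Catenation of an m-bit string x with a t-bit string y. -/
def cat (t x y : ℕ) : ℕ := x * 2 ^ t + y

lemma stmt2_aux (n0 m : ℕ) (hn0 : 1 ≤ n0) (hm : 1 ≤ m) (x y : ℕ)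
    (hx : x < 2 ^ (n0 + m)) (hy : y < 2 ^ (n0 + m)) (hxy : y ≤ x)
    (h : D (n0 + m) x y < 2 ^ m) :
    D n0 (x / 2 ^ m) (y / 2 ^ m) ≤ 1 := by
  have hB : 0 < 2 ^ m := Nat.pow_pos (by norm_num)
  have hpow : (2 : ℕ) ^ (n0 + m) = 2 ^ n0 * 2 ^ m := pow_add 2 n0 m
  set px := x / 2 ^ m with hpxdef
  set py := y / 2 ^ m with hpydef
  have hpxlt : px < 2 ^ n0 := Nat.div_lt_of_lt_mul (by rw [← pow_add, Nat.add_comm]; exact hx)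
  have hpylt : py < 2 ^ n0 := Nat.div_lt_of_lt_mul (by rw [← pow_add, Nat.add_comm]; exact hy)
  have hple : py ≤ px := Nat.div_le_div_right hxy
  have hd : (x : ℤ) - y = ((x - y : ℕ) : ℤ) := by omega
  unfold D at h ⊢
  rw [hd, abs_of_nonneg (Int.natCast_nonneg _)] at h
  rw [min_lt_iff] at h
  rcases h with h1 | h1
  · -- small difference case
    have hdlt : x - y < 2 ^ m := by exact_mod_cast h1
    have hstep : px ≤ py + 1 := by
      have h2 : x ≤ y + 2 ^ m := by omega
      have h3 : x / 2 ^ m ≤ (y + 2 ^ m) / 2 ^ m := Nat.div_le_div_right h2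
      rwa [Nat.add_div_right _ hB] at h3
    refine le_trans (min_le_left _ _) ?_
    rw [abs_le]
    constructor <;> [skip; skip] <;> push_cast <;> omega
  · -- wrap-around case
    have h1' : (2 : ℕ) ^ (n0 + m) < (x - y) + 2 ^ m := by
      have : ((2 : ℤ)) ^ (n0 + m) < ((x - y : ℕ) : ℤ) + 2 ^ m := by linarith
      exact_mod_cast this
    have hylt : y < 2 ^ m := by omega
    have hpy0 : py = 0 := Nat.div_eq_of_lt hylt
    have e : (2 ^ n0 - 1) * 2 ^ m = 2 ^ (n0 + m) - 2 ^ m := by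
      rw [Nat.sub_mul, one_mul, ← pow_add]
    have hxge : (2 ^ n0 - 1) * 2 ^ m ≤ x := by rw [e]; omega
    have hpxge : 2 ^ n0 - 1 ≤ px := (Nat.le_div_iff_mul_le hB).mpr hxge
    have hA : 1 ≤ 2 ^ n0 := Nat.one_le_two_pow
    have hpxeq : px = 2 ^ n0 - 1 := by omega
    refine le_trans (min_le_right _ _) ?_
    rw [hpy0, hpxeq]
    have hA' : (1 : ℤ) ≤ 2 ^ n0 := by exact_mod_cast hA
    have hc : (((2 ^ n0 - 1 : ℕ)) : ℤ) = (2 : ℤ) ^ n0 - 1 := by push_cast [hA]; ring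
    rw [Nat.cast_zero, sub_zero, hc, abs_of_nonneg (by linarith)]
    linarith

/-- if `D_n(x,y) < 2^(n-n0)` then the n0-bit prefixes are at distance ≤ 1. -/
theorem stmt_2 (n n0 : ℕ) (hn : 1 ≤ n) (hn0 : 1 ≤ n0) (hn0n : n0 < n)
    (x y : ℕ) (hx : x < 2 ^ n) (hy : y < 2 ^ n)
    (h : D n x y < 2 ^ (n - n0)) :
    D n0 (pre n n0 x) (pre n n0 y) ≤ 1 := by
  have hm : 1 ≤ n - n0 := by omega
  have hn' : n = n0 + (n - n0) := by omega
  have hDsymm : ∀ k a b : ℕ, D k a b = D k b a := by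
    intro k a b; unfold D; rw [abs_sub_comm]
  rcases le_total y x with hxy | hxy
  · have := stmt2_aux n0 (n - n0) hn0 hm x y (by rw [← hn']; exact hx)
      (by rw [← hn']; exact hy) hxy (by rw [← hn']; exact h)
    simpa [pre] using this
  · have := stmt2_aux n0 (n - n0) hn0 hm y x (by rw [← hn']; exact hy)
      (by rw [← hn']; exact hx) hxy (by rw [← hn', hDsymm]; exact h)
    rw [hDsymm]
    simpa [pre] using this
end

section
/- Let k ≥ 2 and let A_1, …, A_k be bit strings with lengths m_1, …, m_k, each m_i ≥ 3, such that S[A_i,3] = P[A_{i+1},3] for i = 1, …, k−1. Let S_1, …, S_k be bit strings with S_i of length m_i and D_{m_i}(S_i, A_i) ≤ 1 for all i. Then D_3(S[S_i,3], P[S_{i+1},3]) ≤ 2 for every i = 1, …, k−1. -/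
lemma classify (m A S : ℕ) (hA : A < 2^m) (hS : S < 2^m) (hD : D m S A ≤ 1) :
    S = A ∨ S + 1 = A ∨ S = A + 1 ∨ (S = 0 ∧ A + 1 = 2^m) ∨ (A = 0 ∧ S + 1 = 2^m) := by
  unfold D at hD
  zify at hA hS ⊢
  rw [Int.abs_eq_natAbs] at hD
  generalize hN : ((2:ℤ)^m : ℤ) = N at *
  omega

lemma D3_tri (x y z : ℕ) (hx : x < 8) (hy : y < 8) (hz : z < 8) :
    D 3 x z ≤ D 3 x y + D 3 y z := by
  unfold D
  simp only [Int.abs_eq_natAbs]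
  omega

lemma D_symm (n x y : ℕ) : D n x y = D n y x := by
  unfold D; rw [abs_sub_comm]

lemma D3_le (x y : ℕ) (hx : x < 8) (hy : y < 8)
    (h : x = y ∨ x + 1 = y ∨ x = y + 1 ∨ (x = 0 ∧ y = 7) ∨ (y = 0 ∧ x = 7)) :
    D 3 x y ≤ 1 := by
  unfold D
  simp only [Int.abs_eq_natAbs]
  omega

lemma suf_lt (m S : ℕ) : suf 3 S < 8 := by
  have h8 : (0:ℕ) < 2^3 := by norm_num
  unfold suf; omega

lemma suf_close (m A S : ℕ) (h3 : 3 ≤ m) (hA : A < 2^m) (hS : S < 2^m)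
    (hD : D m S A ≤ 1) : D 3 (suf 3 S) (suf 3 A) ≤ 1 := by
  obtain ⟨t, ht⟩ : ∃ t, 2^m = 8 * 2^t :=
    ⟨m - 3, by rw [show (8:ℕ) = 2^3 from rfl, ← pow_add]; congr 1; omega⟩
  have hu : 1 ≤ 2^t := Nat.one_le_two_pow
  have h8 : (0:ℕ) < 2^3 := by norm_num
  apply D3_le _ _ (by unfold suf; omega) (by unfold suf; omega)
  unfold suf
  have hc := classify m A S hA hS hD
  rw [ht] at hc hA hS
  generalize 2^t = u at *
  rcases hc with h | h | h | ⟨h1, h2⟩ | ⟨h1, h2⟩ <;> omega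

lemma pre_quot (u A S : ℕ) (hu : 1 ≤ u) (hA : A < 8*u) (hS : S < 8*u)
    (h : S = A ∨ S + 1 = A ∨ S = A + 1 ∨ (S = 0 ∧ A + 1 = 8*u) ∨ (A = 0 ∧ S + 1 = 8*u)) :
    S/u = A/u ∨ S/u + 1 = A/u ∨ S/u = A/u + 1 ∨ (S/u = 0 ∧ A/u = 7) ∨ (A/u = 0 ∧ S/u = 7) := by
  have key : ∀ B : ℕ, (B+1)/u = B/u ∨ (B+1)/u = B/u + 1 := by
    intro B
    have h1 : B/u ≤ (B+1)/u := Nat.div_le_div_right (by omega)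
    have h2 : (B+1)/u ≤ B/u + 1 := by
      calc (B+1)/u ≤ (B+u)/u := Nat.div_le_div_right (by omega)
      _ = B/u + 1 := Nat.add_div_right B hu
    omega
  have top : (8*u - 1)/u = 7 := by
    have : 8*u - 1 = (u-1) + 7*u := by omega
    rw [this, Nat.add_mul_div_right _ _ hu, Nat.div_eq_of_lt (by omega)]
  rcases h with h | h | h | ⟨h1, h2⟩ | ⟨h1, h2⟩
  · left; rw [h]
  · rcases key S with k | k <;> rw [h] at k <;> omega
  · rcases key A with k | k <;> rw [← h] at k <;> omega
  · right; right; right; left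
    constructor
    · simp [h1]
    · rw [show A = 8*u - 1 by omega]; exact top
  · right; right; right; right
    constructor
    · simp [h1]
    · rw [show S = 8*u - 1 by omega]; exact top

lemma pre_lt (m S : ℕ) (h3 : 3 ≤ m) (hS : S < 2^m) : pre m 3 S < 8 := by
  have ht : 2^m = 8 * 2^(m-3) := by
    rw [show (8:ℕ) = 2^3 from rfl, ← pow_add]; congr 1; omega
  unfold pre
  exact Nat.div_lt_of_lt_mul (by omega)

lemma pre_close (m A S : ℕ) (h3 : 3 ≤ m) (hA : A < 2^m) (hS : S < 2^m)
    (hD : D m S A ≤ 1) : D 3 (pre m 3 S) (pre m 3 A) ≤ 1 := by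
  obtain ⟨t, ht⟩ : ∃ t, 2^m = 8 * 2^t ∧ m - 3 = t :=
    ⟨m - 3, by rw [show (8:ℕ) = 2^3 from rfl, ← pow_add]; congr 1; omega, rfl⟩
  obtain ⟨ht, ht2⟩ := ht
  have hu : 1 ≤ 2^t := Nat.one_le_two_pow
  have hc := classify m A S hA hS hD
  rw [ht] at hc hA hS
  unfold pre
  rw [ht2]
  have hq := pre_quot (2^t) A S hu hA hS hc
  apply D3_le _ _ (Nat.div_lt_of_lt_mul (by omega)) (Nat.div_lt_of_lt_mul (by omega))
  exact hq

/-- with 3-bit overlaps and per-block errors ≤ 1, adjacent overlap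
    estimates are at distance ≤ 2. -/
theorem stmt_4 (k : ℕ) (hk : 2 ≤ k) (m A S : ℕ → ℕ)
    (hm : ∀ i, 1 ≤ i → i ≤ k → 3 ≤ m i)
    (hA : ∀ i, 1 ≤ i → i ≤ k → A i < 2 ^ m i)
    (hS : ∀ i, 1 ≤ i → i ≤ k → S i < 2 ^ m i)
    (hover : ∀ i, 1 ≤ i → i ≤ k - 1 → suf 3 (A i) = pre (m (i + 1)) 3 (A (i + 1)))
    (hD : ∀ i, 1 ≤ i → i ≤ k → D (m i) (S i) (A i) ≤ 1) :
    ∀ i, 1 ≤ i → i ≤ k - 1 →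
      D 3 (suf 3 (S i)) (pre (m (i + 1)) 3 (S (i + 1))) ≤ 2 := by
  intro i hi1 hik
  have hik' : i ≤ k := by omega
  have hik1 : i + 1 ≤ k := by omega
  have h1 : D 3 (suf 3 (S i)) (suf 3 (A i)) ≤ 1 :=
    suf_close (m i) (A i) (S i) (hm i hi1 hik') (hA i hi1 hik') (hS i hi1 hik')
      (hD i hi1 hik')
  have h2 : D 3 (pre (m (i+1)) 3 (S (i+1))) (pre (m (i+1)) 3 (A (i+1))) ≤ 1 :=
    pre_close (m (i+1)) (A (i+1)) (S (i+1)) (hm (i+1) (by omega) hik1)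
      (hA (i+1) (by omega) hik1) (hS (i+1) (by omega) hik1) (hD (i+1) (by omega) hik1)
  have hov := hover i hi1 hik
  have tri := D3_tri (suf 3 (S i)) (suf 3 (A i)) (pre (m (i+1)) 3 (S (i+1)))
    (suf_lt (m i) (S i)) (suf_lt (m i) (A i))
    (pre_lt (m (i+1)) (S (i+1)) (hm (i+1) (by omega) hik1) (hS (i+1) (by omega) hik1))
  rw [hov] at h1 tri
  rw [D_symm] at h2
  linarith
end

section
/- Let t ≥ 3 and let A and S be t-bit strings with D_t(S,A) ≤ 1. Then for every integer b with |b| ≤ 1 and every t0 with 2 ≤ t0 ≤ t: S +_t b = A if and only if S[S,t0] +_{t0} b = S[A,t0]. -/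
lemma wadd_eq_iff {n x : ℕ} {c : ℤ} {y : ℕ} (hy : y < 2 ^ n) :
    wadd n x c = y ↔ ((x : ℤ) + c) % (2 ^ n : ℤ) = (y : ℤ) := by
  unfold wadd
  have h0 : (0:ℤ) ≤ ((x:ℤ) + c) % (2 ^ n : ℤ) := Int.emod_nonneg _ (by positivity)
  omega

lemma emod_eq_iff_dvd {a b n : ℤ} (hb0 : 0 ≤ b) (hb : b < n) :
    a % n = b ↔ n ∣ (a - b) := by
  constructor
  · intro h'
    have : a % n = b % n := by rw [h', Int.emod_eq_of_lt hb0 hb]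
    exact Int.ModEq.dvd (Int.ModEq.symm this)
  · rintro ⟨k, hk⟩
    have h2 : a = b + n * k := by linarith
    rw [h2, Int.add_mul_emod_self_left, Int.emod_eq_of_lt hb0 hb]

/-- for |b| ≤ 1 and 2 ≤ t0 ≤ t, `S +_t b = A` iff `S[S,t0] +_{t0} b = S[A,t0]`. -/
theorem stmt_6 (t : ℕ) (ht : 3 ≤ t) (A S : ℕ) (hA : A < 2 ^ t) (hS : S < 2 ^ t)
    (h : D t S A ≤ 1) :
    ∀ b : ℤ, |b| ≤ 1 → ∀ t0 : ℕ, 2 ≤ t0 → t0 ≤ t →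
      (wadd t S b = A ↔ wadd t0 (suf t0 S) b = suf t0 A) := by
  intro b hb t0 ht0 ht0t
  have hsA : suf t0 A < 2 ^ t0 := Nat.mod_lt _ (by positivity)
  have hdvd : (2 ^ t0 : ℤ) ∣ (2 ^ t : ℤ) := pow_dvd_pow 2 ht0t
  have h4 : (4:ℤ) ≤ 2 ^ t0 := by
    calc (4:ℤ) = 2 ^ 2 := by norm_num
    _ ≤ 2 ^ t0 := pow_le_pow_right₀ (by norm_num) ht0
  rw [wadd_eq_iff hA, wadd_eq_iff hsA]
  -- rewrite both sides as divisibility statements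
  have hL : (((S:ℤ) + b) % (2 ^ t : ℤ) = (A : ℤ)) ↔ (2 ^ t : ℤ) ∣ ((S:ℤ) + b - A) :=
    emod_eq_iff_dvd (by positivity) (by exact_mod_cast hA)
  have hcastS : ((suf t0 S : ℕ) : ℤ) = (S : ℤ) % (2 ^ t0 : ℤ) := by
    unfold suf; push_cast; ring
  have hcastA : ((suf t0 A : ℕ) : ℤ) = (A : ℤ) % (2 ^ t0 : ℤ) := by
    unfold suf; push_cast; ring
  have hR : (((suf t0 S : ℕ):ℤ) + b) % (2 ^ t0 : ℤ) = ((suf t0 A : ℕ):ℤ) ↔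
      (2 ^ t0 : ℤ) ∣ ((S:ℤ) + b - A) := by
    rw [hcastS, Int.emod_add_emod]
    rw [emod_eq_iff_dvd (by rw [hcastA]; exact Int.emod_nonneg _ (by positivity))
        (by rw [hcastA]; exact Int.emod_lt_of_pos _ (by positivity))]
    rw [hcastA]
    constructor
    · intro hd
      have h1 : (2 ^ t0 : ℤ) ∣ ((A:ℤ) - (A:ℤ) % (2 ^ t0 : ℤ)) := Int.dvd_self_sub_of_emod_eq rfl
      have h2 : (S:ℤ) + b - A = ((S:ℤ) + b - (A:ℤ) % (2 ^ t0 : ℤ)) - ((A:ℤ) - (A:ℤ) % (2 ^ t0 : ℤ)) := by ring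
      rw [h2]; exact dvd_sub hd h1
    · intro hd
      have h1 : (2 ^ t0 : ℤ) ∣ ((A:ℤ) - (A:ℤ) % (2 ^ t0 : ℤ)) := Int.dvd_self_sub_of_emod_eq rfl
      have h2 : (S:ℤ) + b - (A:ℤ) % (2 ^ t0 : ℤ) = ((S:ℤ) + b - A) + ((A:ℤ) - (A:ℤ) % (2 ^ t0 : ℤ)) := by ring
      rw [h2]; exact dvd_add hd h1
  rw [hL, hR]
  constructor
  · exact fun hd => dvd_trans hdvd hd
  · intro hd
    have hmin : |(S:ℤ) - A| ≤ 1 ∨ (2:ℤ) ^ t - |(S:ℤ) - A| ≤ 1 := min_le_iff.mp h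
    have hbb : -1 ≤ b ∧ b ≤ 1 := abs_le.mp hb
    rcases hmin with h1 | h2
    · have habs := abs_le.mp h1
      have hd0 : (S:ℤ) + b - A = 0 := by
        refine Int.eq_zero_of_abs_lt_dvd hd ?_
        have : |(S:ℤ) + b - A| ≤ 2 := by
          rw [abs_le]; constructor <;> [linarith [habs.1, hbb.1]; linarith [habs.2, hbb.2]]
        linarith
      rw [hd0]; exact dvd_zero _
    · have hSt : (S:ℤ) < 2 ^ t := by exact_mod_cast hS
      have hAt : (A:ℤ) < 2 ^ t := by exact_mod_cast hA
      have hS0 : (0:ℤ) ≤ S := Int.ofNat_nonneg S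
      have hA0 : (0:ℤ) ≤ A := Int.ofNat_nonneg A
      have hub : |(S:ℤ) - A| ≤ 2 ^ t - 1 := by
        rw [abs_le]; constructor <;> linarith
      have heq : |(S:ℤ) - A| = 2 ^ t - 1 := le_antisymm hub (by linarith)
      rcases (abs_eq (by linarith : (0:ℤ) ≤ 2 ^ t - 1)).mp heq with he | he
      · -- S - A = 2^t - 1
        have hb1 : (2 ^ t0 : ℤ) ∣ (b - 1) := by
          have := dvd_sub hd hdvd
          rw [show b - 1 = (S:ℤ) + b - A - 2 ^ t by linarith]; exact this
        have : b - 1 = 0 := by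
          refine Int.eq_zero_of_abs_lt_dvd hb1 ?_
          have : |b - 1| ≤ 2 := by rw [abs_le]; omega
          linarith
        have hd2 : (S:ℤ) + b - A = 2 ^ t := by linarith
        rw [hd2]
      · -- S - A = -(2^t - 1)
        have hb1 : (2 ^ t0 : ℤ) ∣ (b + 1) := by
          have := dvd_add hd hdvd
          rw [show b + 1 = (S:ℤ) + b - A + 2 ^ t by linarith]; exact this
        have : b + 1 = 0 := by
          refine Int.eq_zero_of_abs_lt_dvd hb1 ?_
          have : |b + 1| ≤ 2 := by rw [abs_le]; omega
          linarith
        have hd2 : (S:ℤ) + b - A = -(2 ^ t) := by linarith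
        rw [hd2]
        exact dvd_neg.mpr dvd_rfl
end

section
/- Let t ≥ 3, let A and S be t-bit strings with D_t(S,A) ≤ 1, and let y be a 3-bit string with D_3(y, S[A,3]) ≤ 1. Then there exists a unique integer b with |b| ≤ 2 such that S[S,3] +_3 b = y. -/
/-- If `D n x y ≤ 1` then `y ≡ x + e (mod 2^n)` for some `|e| ≤ 1`. -/
lemma Dlem (n x y : ℕ) (hx : x < 2^n) (hy : y < 2^n) (h : D n x y ≤ 1) :
    ∃ e : ℤ, |e| ≤ 1 ∧ ((x:ℤ) + e) ≡ (y:ℤ) [ZMOD ((2:ℤ)^n)] := by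
  unfold D at h
  have hx' : (x:ℤ) < 2^n := by exact_mod_cast hx
  have hy' : (y:ℤ) < 2^n := by exact_mod_cast hy
  have hx0 : (0:ℤ) ≤ x := Int.natCast_nonneg x
  have hy0 : (0:ℤ) ≤ y := Int.natCast_nonneg y
  rcases le_total (|(x:ℤ) - y|) (2^n - |(x:ℤ) - y|) with hc | hc
  · rw [min_eq_left hc] at h
    refine ⟨(y:ℤ) - x, by rw [abs_sub_comm]; exact h, by simp [Int.ModEq]⟩
  · rw [min_eq_right hc] at h
    rcases abs_cases ((x:ℤ) - y) with ⟨habs, _⟩ | ⟨habs, _⟩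
    · refine ⟨1, by norm_num, Int.ModEq.symm (Int.modEq_iff_dvd.mpr ?_)⟩
      rw [habs] at h hc
      have : ((x:ℤ) + 1) - y = (2:ℤ)^n ∨ ((x:ℤ) + 1) - y = 0 := by omega
      rcases this with h' | h'
      · exact ⟨1, by linarith⟩
      · exact ⟨0, by linarith⟩
    · refine ⟨-1, by norm_num, Int.ModEq.symm (Int.modEq_iff_dvd.mpr ?_)⟩
      rw [habs] at h hc
      have : ((x:ℤ) + -1) - y = -((2:ℤ)^n) ∨ ((x:ℤ) + -1) - y = 0 := by omega
      rcases this with h' | h'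
      · exact ⟨-1, by linarith⟩
      · exact ⟨0, by linarith⟩

/-- there is a unique b with |b| ≤ 2 and `S[S,3] +_3 b = y`. -/
theorem stmt_7 (t : ℕ) (ht : 3 ≤ t) (A S : ℕ) (hA : A < 2 ^ t) (hS : S < 2 ^ t)
    (hSA : D t S A ≤ 1) (y : ℕ) (hy : y < 2 ^ 3) (hyA : D 3 y (suf 3 A) ≤ 1) :
    ∃! b : ℤ, |b| ≤ 2 ∧ wadd 3 (suf 3 S) b = y := by
  -- extract e with |e| ≤ 1 and A ≡ S + e [ZMOD 2^t]
  obtain ⟨e, he, hAe⟩ := Dlem t S A hS hA hSA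
  obtain ⟨f, hf, hyf⟩ := Dlem 3 y (suf 3 A) hy (Nat.mod_lt _ (by positivity)) hyA
  -- reduce to mod 8
  have h8 : ((2:ℤ)^3) ∣ (2:ℤ)^t := pow_dvd_pow 2 ht
  have hAe8 : ((S:ℤ) + e) ≡ (A:ℤ) [ZMOD ((2:ℤ)^3)] := hAe.of_dvd h8
  have hsufA : ((suf 3 A : ℕ) : ℤ) ≡ (A:ℤ) [ZMOD ((2:ℤ)^3)] := by
    unfold suf
    push_cast
    exact Int.emod_emod_of_dvd _ dvd_rfl
  have hsufS : ((suf 3 S : ℕ) : ℤ) ≡ (S:ℤ) [ZMOD ((2:ℤ)^3)] := by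
    unfold suf
    push_cast
    exact Int.emod_emod_of_dvd _ dvd_rfl
  -- key congruence: suf 3 S + (e - f) ≡ y [ZMOD 8]
  have hkey : ((suf 3 S : ℕ) : ℤ) + (e - f) ≡ (y:ℤ) [ZMOD ((2:ℤ)^3)] := by
    have h1 : ((suf 3 S : ℕ) : ℤ) + (e - f) ≡ (S:ℤ) + (e - f) [ZMOD ((2:ℤ)^3)] :=
      hsufS.add_right _
    have h2 : (S:ℤ) + (e - f) ≡ (A:ℤ) - f [ZMOD ((2:ℤ)^3)] := by
      have := hAe8.sub_right f
      simpa [add_sub_assoc] using this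
    have h3 : (A:ℤ) - f ≡ ((suf 3 A : ℕ) : ℤ) - f [ZMOD ((2:ℤ)^3)] :=
      hsufA.symm.sub_right _
    have h4 : ((suf 3 A : ℕ) : ℤ) - f ≡ (y:ℤ) [ZMOD ((2:ℤ)^3)] := by
      have := (hyf.sub_right f).symm
      simpa using this
    exact ((h1.trans h2).trans h3).trans h4
  have hy8 : (y:ℤ) < 8 := by exact_mod_cast hy
  have he' := abs_le.mp he
  have hf' := abs_le.mp hf
  refine ⟨e - f, ⟨abs_le.mpr (by omega), ?_⟩, ?_⟩
  · unfold wadd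
    have : (((suf 3 S : ℕ) : ℤ) + (e - f)) % 2^3 = (y:ℤ) % 2^3 := hkey
    rw [this, Int.emod_eq_of_lt (by positivity) (by norm_num; omega)]
    simp
  · rintro b ⟨hb2, hb⟩
    unfold wadd at hb
    have hnn : (0:ℤ) ≤ (((suf 3 S : ℕ) : ℤ) + b) % 2^3 :=
      Int.emod_nonneg _ (by norm_num)
    have heq : (((suf 3 S : ℕ) : ℤ) + b) % 2^3 = (y:ℤ) := by
      omega
    have h5 : (((suf 3 S : ℕ) : ℤ) + b) ≡ ((suf 3 S : ℕ) : ℤ) + (e - f) [ZMOD ((2:ℤ)^3)] := by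
      unfold Int.ModEq at hkey ⊢
      rw [heq, hkey]
      exact (Int.emod_eq_of_lt (by positivity) (by norm_num; omega)).symm
    have := Int.ModEq.dvd h5
    have h6 : (8:ℤ) ∣ (e - f) - b := by
      have : ((suf 3 S : ℕ) : ℤ) + (e - f) - (((suf 3 S : ℕ) : ℤ) + b) = (e - f) - b := by ring
      rw [this] at *
      simpa using Int.ModEq.dvd h5
    have hb2' := abs_le.mp hb2
    omega
end

section
/- Let n ≥ 1, 1 ≤ n0 < n, let x and y be n-bit strings, and let b be an integer with |b| < 2^(n−n0) such that x +_n b = y. Then there exists an integer b' with |b'| ≤ 1 such that P[x,n0] +_{n0} b' = P[y,n0]. -/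
lemma aux_div (a b c : ℤ) (hb : 0 < b) (hc : 0 < c) :
    a % (b * c) / b = a / b % c := by
  have hbc : 0 < b * c := mul_pos hb hc
  set q := a / (b * c) with hqdef
  have hmod : a % (b * c) = a - b * c * q := Int.emod_def a (b * c)
  have hd : a % (b * c) / b = a / b - c * q := by
    rw [hmod]
    have : a - b * c * q = a + (-(c * q)) * b := by ring
    rw [this, Int.add_mul_ediv_right _ _ hb.ne']
    ring
  have h0 : 0 ≤ a % (b * c) := Int.emod_nonneg a hbc.ne'
  have h1 : a % (b * c) < b * c := Int.emod_lt_of_pos a hbc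
  have hd0 : 0 ≤ a / b - c * q := hd ▸ Int.ediv_nonneg h0 hb.le
  have hd1 : a / b - c * q < c := by
    rw [← hd]
    rw [Int.ediv_lt_iff_lt_mul hb]
    linarith [h1]
  have : (a / b - c * q) % c = a / b % c := by
    have : a / b - c * q = a / b + (-q) * c := by ring
    rw [this, Int.add_mul_emod_self_right]
  rw [hd, ← this, Int.emod_eq_of_lt hd0 hd1]

/-- if `x +_n b = y` with |b| < 2^(n-n0), then the n0-bit prefixes differ
    by a wrap-around addition of some b' with |b'| ≤ 1. -/
theorem stmt_11 (n n0 : ℕ) (hn : 1 ≤ n) (hn0 : 1 ≤ n0) (hn0n : n0 < n)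
    (x y : ℕ) (hx : x < 2 ^ n) (hy : y < 2 ^ n)
    (b : ℤ) (hb : |b| < 2 ^ (n - n0)) (hxy : wadd n x b = y) :
    ∃ b' : ℤ, |b'| ≤ 1 ∧ wadd n0 (pre n n0 x) b' = pre n n0 y := by
  set m := n - n0 with hm
  have hnm : n = m + n0 := by omega
  have hm2 : (0:ℤ) < 2 ^ m := by positivity
  have hn02 : (0:ℤ) < 2 ^ n0 := by positivity
  set z : ℤ := (x : ℤ) + b with hz
  have h2n : ((2:ℤ) ^ n) = 2 ^ m * 2 ^ n0 := by rw [hnm, pow_add]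
  have hyz : (y : ℤ) = z % 2 ^ n := by
    rw [← hxy]
    unfold wadd
    rw [Int.toNat_of_nonneg (Int.emod_nonneg _ (by positivity))]
  set q : ℤ := (x : ℤ) / 2 ^ m with hqdef
  have hq : ((pre n n0 x : ℕ) : ℤ) = q := by
    unfold pre
    rw [← hm]
    push_cast [Int.natCast_ediv]
    norm_num [hqdef]
  set r : ℤ := (x : ℤ) % 2 ^ m with hrdef
  have hr0 : 0 ≤ r := Int.emod_nonneg _ hm2.ne'
  have hr1 : r < 2 ^ m := Int.emod_lt_of_pos _ hm2
  have hzq : z = (r + b) + q * 2 ^ m := by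
    have := Int.emod_add_mul_ediv (x : ℤ) (2 ^ m)
    rw [hz]; linarith
  have hbm : |b| < 2 ^ m := by rw [hm]; exact_mod_cast hb
  have hb1 : -(2:ℤ) ^ m < b := by
    have := neg_abs_le b; linarith
  have hb2 : b < 2 ^ m := (le_abs_self b).trans_lt hbm
  refine ⟨(r + b) / 2 ^ m, ?_, ?_⟩
  · rw [abs_le]
    constructor
    · rw [Int.le_ediv_iff_mul_le hm2]; linarith
    · have : (r + b) / 2 ^ m < 2 := by
        rw [Int.ediv_lt_iff_lt_mul hm2]; linarith
      omega
  · have hzdiv : z / 2 ^ m = q + (r + b) / 2 ^ m := by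
      rw [hzq, Int.add_mul_ediv_right _ _ hm2.ne']; ring
    have key : (y : ℤ) / 2 ^ m = (q + (r + b) / 2 ^ m) % 2 ^ n0 := by
      rw [hyz, h2n, aux_div z _ _ hm2 hn02, hzdiv]
    unfold wadd pre
    rw [← hm]
    have hq' : ((x / 2 ^ m : ℕ) : ℤ) = q := by
      push_cast [Int.natCast_ediv]; norm_num [hqdef]
    rw [hq']
    have hycast : ((y / 2 ^ m : ℕ) : ℤ) = (y : ℤ) / 2 ^ m := by
      push_cast [Int.natCast_ediv]; norm_num
    have : (((q + (r + b) / 2 ^ m) % 2 ^ n0) : ℤ).toNat = y / 2 ^ m := by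
      rw [← key, ← hycast, Int.toNat_natCast]
    exact_mod_cast this
end

section
/- Let m ≥ 3 and t ≥ 3. Let A be an m-bit string and B a t-bit string with S[A,3] = P[B,3]. Let S be an m-bit string with D_m(S,A) ≤ 1 and T a t-bit string with D_t(T,B) ≤ 1. Let b₁, b₂, b₃ be integers with |b₁| ≤ 1, |b₂| ≤ 1, |b₃| ≤ 1 such that T +_t b₁ = B, P[T,3] +_3 b₂ = P[B,3], and S[S,3] +_3 b₃ = P[B,3]. Define the (m+t−3)-bit strings S' = (S +_m (b₃ − b₂)) ∘ S[T, t−3] and A' = A ∘ S[B, t−3]. Then S' +_{m+t−3} b₁ = A'. -/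
lemma wadd_emod (n x : ℕ) (c : ℤ) : ((x : ℤ) + c) % (2^n : ℤ) = (wadd n x c : ℤ) := by
  rw [wadd, Int.toNat_of_nonneg (Int.emod_nonneg _ (by positivity))]

lemma wadd_dvd (n x : ℕ) (c : ℤ) : (2^n : ℤ) ∣ (x : ℤ) + c - (wadd n x c : ℤ) :=
  Int.dvd_self_sub_of_emod_eq (wadd_emod n x c)

/-- the corrected catenation satisfies `S' +_{m+t-3} b₁ = A'`. -/
theorem stmt_13 (m t : ℕ) (hm : 3 ≤ m) (ht : 3 ≤ t)
    (A B : ℕ) (hA : A < 2 ^ m) (hB : B < 2 ^ t) (hAB : suf 3 A = pre t 3 B)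
    (S : ℕ) (hS : S < 2 ^ m) (hSA : D m S A ≤ 1)
    (T : ℕ) (hT : T < 2 ^ t) (hTB : D t T B ≤ 1)
    (b₁ b₂ b₃ : ℤ) (hb₁ : |b₁| ≤ 1) (hb₂ : |b₂| ≤ 1) (hb₃ : |b₃| ≤ 1)
    (h₁ : wadd t T b₁ = B)
    (h₂ : wadd 3 (pre t 3 T) b₂ = pre t 3 B) (h₃ : wadd 3 (suf 3 S) b₃ = pre t 3 B) :
    wadd (m + t - 3) (cat (t - 3) (wadd m S (b₃ - b₂)) (suf (t - 3) T)) b₁ =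
      cat (t - 3) A (suf (t - 3) B) := by
  have hb₁' : -1 ≤ b₁ ∧ b₁ ≤ 1 := abs_le.mp hb₁
  have hb₂' : -1 ≤ b₂ ∧ b₂ ≤ 1 := abs_le.mp hb₂
  have hb₃' : -1 ≤ b₃ ∧ b₃ ≤ 1 := abs_le.mp hb₃
  set e := t - 3 with he
  have hte : t = 3 + e := by omega
  have hn : m + t - 3 = m + e := by omega
  set qT := pre t 3 T with hqT
  set rT := suf e T with hrT
  set qB := pre t 3 B with hqB
  set rB := suf e B with hrB
  -- basic decompositions and bounds
  have h2e : (0:ℤ) < 2^e := by positivity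
  have hTdecN : qT * 2^e + rT = T := by
    rw [hqT, hrT, pre, suf, ← he]; exact Nat.div_add_mod' T (2^e)
  have hBdecN : qB * 2^e + rB = B := by
    rw [hqB, hrB, pre, suf, ← he]; exact Nat.div_add_mod' B (2^e)
  have hTdec : (T : ℤ) = (qT : ℤ) * 2^e + rT := by exact_mod_cast hTdecN.symm
  have hBdec : (B : ℤ) = (qB : ℤ) * 2^e + rB := by exact_mod_cast hBdecN.symm
  have hrTlt : (rT : ℤ) < 2^e := by
    have : rT < 2^e := Nat.mod_lt _ (by positivity)
    exact_mod_cast this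
  have hrBlt : (rB : ℤ) < 2^e := by
    have : rB < 2^e := Nat.mod_lt _ (by positivity)
    exact_mod_cast this
  have hrTnn : (0:ℤ) ≤ rT := by positivity
  have hrBnn : (0:ℤ) ≤ rB := by positivity
  -- divisibility facts from the wadd hypotheses
  have d1 : (2^t : ℤ) ∣ (T : ℤ) + b₁ - B := by
    have := wadd_dvd t T b₁; rwa [h₁] at this
  have d2 : (8 : ℤ) ∣ (qT : ℤ) + b₂ - qB := by
    have := wadd_dvd 3 qT b₂; rw [h₂] at this; norm_num at this; exact_mod_cast this
  have d3 : (8 : ℤ) ∣ (S : ℤ) + b₃ - qB := by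
    have h := wadd_dvd 3 (suf 3 S) b₃
    rw [h₃] at h; norm_num at h
    have hs : (8 : ℤ) ∣ (S : ℤ) - (suf 3 S : ℤ) :=
      Int.dvd_self_sub_of_emod_eq (by rw [suf]; push_cast; norm_num)
    have := dvd_add hs h
    convert this using 1; rfl; push_cast; ring
  have h2t : (2^t : ℤ) = 2^e * 8 := by rw [hte]; ring
  -- carry analysis: rT + b₁ - rB = 2^e * b₂
  have hu : (2^e : ℤ) ∣ (rT : ℤ) + b₁ - rB := by
    have h1 : (2^e : ℤ) ∣ (T : ℤ) + b₁ - B := dvd_trans ⟨8, h2t⟩ d1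
    have h2 : ((T : ℤ) + b₁ - B) - (((qT:ℤ) - qB) * 2^e) = (rT : ℤ) + b₁ - rB := by
      rw [hTdec, hBdec]; ring
    rw [← h2]
    exact dvd_sub h1 (dvd_mul_left _ _)
  obtain ⟨k, hk⟩ := hu
  have hkb : -1 ≤ k ∧ k ≤ 1 := by
    have hub : (2:ℤ)^e * k ≤ 2^e * 1 := by linarith [hk]
    have hlb : (2:ℤ)^e * (-1) ≤ 2^e * k := by linarith [hk]
    exact ⟨le_of_mul_le_mul_left hlb h2e, le_of_mul_le_mul_left hub h2e⟩
  have hcarry : k = b₂ := by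
    have h8 : (8 : ℤ) ∣ (qT : ℤ) - qB + k := by
      obtain ⟨j, hj⟩ := d1
      refine ⟨j, ?_⟩
      have hx : ((qT : ℤ) - qB + k) * 2^e = (8 * j) * 2^e := by
        have : (T : ℤ) + b₁ - B = ((qT:ℤ) - qB) * 2^e + ((rT:ℤ) + b₁ - rB) := by
          rw [hTdec, hBdec]; ring
        rw [this, hk, h2t] at hj
        linarith [hj]
      have h2e' : (2^e : ℤ) ≠ 0 := ne_of_gt h2e
      have := mul_right_cancel₀ h2e' hx
      linarith [this]
    omega
  rw [hcarry] at hk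
  -- wrap offset of S to A equals b₃
  have hd : ∃ d : ℤ, -1 ≤ d ∧ d ≤ 1 ∧ (2^m : ℤ) ∣ (S : ℤ) + d - A := by
    rw [D, min_le_iff] at hSA
    have hSz : (S : ℤ) < 2^m := by exact_mod_cast hS
    have hAz : (A : ℤ) < 2^m := by exact_mod_cast hA
    have hSnn : (0:ℤ) ≤ S := by positivity
    have hAnn : (0:ℤ) ≤ A := by positivity
    rcases hSA with h | h
    · rcases abs_le.mp h with ⟨h1, h2⟩
      exact ⟨(A : ℤ) - S, by linarith, by linarith, by simp⟩
    · rcases abs_cases ((S:ℤ) - A) with ⟨h1, _⟩ | ⟨h1, _⟩ <;> rw [h1] at h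
      · exact ⟨1, by norm_num, by norm_num, ⟨1, by linarith⟩⟩
      · exact ⟨-1, by norm_num, by norm_num, ⟨-1, by linarith⟩⟩
  obtain ⟨d, hd1, hd2, hdvd⟩ := hd
  have hdb : d = b₃ := by
    have h8m : (8 : ℤ) ∣ 2^m := by
      rw [show (8:ℤ) = 2^3 by norm_num]
      exact pow_dvd_pow 2 hm
    have hda : (8:ℤ) ∣ (S : ℤ) + d - A := dvd_trans h8m hdvd
    have hAq : (8:ℤ) ∣ (A : ℤ) - qB :=
      Int.dvd_self_sub_of_emod_eq (by rw [← hAB, suf]; push_cast; norm_num)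
    have hsum : (8:ℤ) ∣ (S:ℤ) + d - qB := by
      have := dvd_add hda hAq
      convert this using 1; rfl; ring
    omega
  rw [hdb] at hdvd
  -- the corrected string
  set S' := wadd m S (b₃ - b₂) with hS'
  have hS'dvd : (2^m : ℤ) ∣ (S : ℤ) + (b₃ - b₂) - S' := wadd_dvd m S (b₃ - b₂)
  have hS'lt : (S' : ℤ) < 2^m := by
    rw [hS', ← wadd_emod]; exact Int.emod_lt_of_pos _ (by positivity)
  have hS'nn : (0:ℤ) ≤ S' := by positivity
  have hkey : (2^m : ℤ) ∣ (S' : ℤ) + b₂ - A := by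
    have := dvd_sub hdvd hS'dvd
    convert this using 1; rfl; ring
  -- conclude
  rw [hn]
  have hAz : (A : ℤ) < 2^m := by exact_mod_cast hA
  have hAnn : (0:ℤ) ≤ A := by positivity
  have hM : (2^(m+e) : ℤ) = 2^m * 2^e := by rw [pow_add]
  have hgoal : ((cat e S' rT : ℤ) + b₁) % (2^(m+e) : ℤ) = (cat e A rB : ℤ) := by
    obtain ⟨j, hj⟩ := hkey
    have hZ : (cat e S' rT : ℤ) + b₁ = (cat e A rB : ℤ) + 2^(m+e) * j := by
      push_cast [cat]
      have hsa : (S' : ℤ) + b₂ = A + 2^m * j := by linarith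
      rw [hM]
      linear_combination (2^e : ℤ) * hsa + hk
    rw [hZ, Int.add_mul_emod_self_left]
    refine Int.emod_eq_of_lt (by positivity) ?_
    push_cast [cat, hM]
    have hb : (A:ℤ)*2^e + 2^e ≤ 2^m * 2^e := by
      have h1 : ((A:ℤ) + 1) * 2^e ≤ 2^m * 2^e :=
        mul_le_mul_of_nonneg_right (by linarith) (le_of_lt h2e)
      linarith [h1]
    linarith [hb, hrBlt]
  rw [wadd, hgoal]
  simp
end

section
/- Let m ≥ 3 and t ≥ 3. Let A be an m-bit string and B a t-bit string with S[A,3] = P[B,3]. Let S be an m-bit string with D_m(S,A) ≤ 1 and T a t-bit string with D_t(T,B) ≤ 1. Let b₂ and b₃ be integers with |b₂| ≤ 1 and |b₃| ≤ 1 such that P[T,3] +_3 b₂ = P[B,3] and S[S,3] +_3 b₃ = P[B,3]. Define the (m+t−3)-bit strings S' = (S +_m (b₃ − b₂)) ∘ S[T, t−3] and A' = A ∘ S[B, t−3]. Then D_{m+t−3}(S', A') = D_t(T, B). -/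
lemma two_le_two_pow' {n : ℕ} (hn : 1 ≤ n) : (2:ℤ) ≤ 2 ^ n := by
  calc (2:ℤ) = 2^1 := (pow_one 2).symm
  _ ≤ 2^n := pow_le_pow_right₀ (by norm_num) hn

lemma D_eq_abs {n : ℕ} (hn : 1 ≤ n) {x y : ℕ} (hx : x < 2^n) (hy : y < 2^n)
    {e : ℤ} (he : |e| ≤ 1) (hd : (2^n : ℤ) ∣ ((x:ℤ) - y - e)) : D n x y = |e| := by
  obtain ⟨k, hk⟩ := hd
  have hc := two_le_two_pow' hn
  have hx' : (x:ℤ) < 2^n := by exact_mod_cast hx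
  have hy' : (y:ℤ) < 2^n := by exact_mod_cast hy
  have hx0 : (0:ℤ) ≤ (x:ℤ) := Int.natCast_nonneg x
  have hy0 : (0:ℤ) ≤ (y:ℤ) := Int.natCast_nonneg y
  have he' := abs_le.mp he
  simp only [D]
  generalize hgen : (2:ℤ)^n = c at hc hx' hy' hk ⊢
  have hk1 : -1 ≤ k := by nlinarith
  have hk2 : k ≤ 1 := by nlinarith
  interval_cases k <;>
  · rcases abs_cases ((x:ℤ) - y) with ⟨h1,h2⟩|⟨h1,h2⟩ <;>
    rcases abs_cases e with ⟨h3,h4⟩|⟨h3,h4⟩ <;>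
    rw [h1, h3] <;> omega

lemma D_le_one {n : ℕ} (hn : 1 ≤ n) {x y : ℕ} (hx : x < 2^n) (hy : y < 2^n) (h : D n x y ≤ 1) :
    ∃ e : ℤ, |e| ≤ 1 ∧ (2^n : ℤ) ∣ ((x:ℤ) - y - e) := by
  have hc := two_le_two_pow' hn
  have hx' : (x:ℤ) < 2^n := by exact_mod_cast hx
  have hy' : (y:ℤ) < 2^n := by exact_mod_cast hy
  have hx0 : (0:ℤ) ≤ (x:ℤ) := Int.natCast_nonneg x
  have hy0 : (0:ℤ) ≤ (y:ℤ) := Int.natCast_nonneg y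
  rcases le_or_gt |(x:ℤ) - y| 1 with h1 | h1
  · exact ⟨(x:ℤ) - y, h1, by simp⟩
  · have h2 : (2:ℤ)^n - |(x:ℤ) - y| ≤ 1 := by
      simp only [D] at h
      rcases min_le_iff.mp h with h'|h'
      · linarith
      · exact h'
    have hle : |(x:ℤ) - y| ≤ 2^n - 1 := abs_le.mpr ⟨by linarith, by linarith⟩
    have habs : |(x:ℤ) - y| = 2^n - 1 := le_antisymm hle (by linarith)
    rcases (abs_eq (by linarith : (0:ℤ) ≤ 2^n - 1)).mp habs with h3|h3
    · exact ⟨-1, by norm_num, ⟨1, by linarith⟩⟩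
    · exact ⟨1, by norm_num, ⟨-1, by linarith⟩⟩

lemma cat_lt {m k w s : ℕ} (hw : w < 2^m) (hs : s < 2^k) : w * 2^k + s < 2^(m+k) := by
  calc w * 2^k + s < w * 2^k + 2^k := by omega
  _ = (w+1) * 2^k := by ring
  _ ≤ 2^m * 2^k := Nat.mul_le_mul_right _ hw
  _ = 2^(m+k) := (pow_add 2 m k).symm

/-- the corrected catenation is at the same distance from `A'` as `T` is
    from `B`: `D_{m+t-3}(S',A') = D_t(T,B)`. -/
theorem stmt_14 (m t : ℕ) (hm : 3 ≤ m) (ht : 3 ≤ t)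
    (A B : ℕ) (hA : A < 2 ^ m) (hB : B < 2 ^ t) (hAB : suf 3 A = pre t 3 B)
    (S : ℕ) (hS : S < 2 ^ m) (hSA : D m S A ≤ 1)
    (T : ℕ) (hT : T < 2 ^ t) (hTB : D t T B ≤ 1)
    (b₂ b₃ : ℤ) (hb₂ : |b₂| ≤ 1) (hb₃ : |b₃| ≤ 1)
    (h₂ : wadd 3 (pre t 3 T) b₂ = pre t 3 B) (h₃ : wadd 3 (suf 3 S) b₃ = pre t 3 B) :
    D (m + t - 3)
        (cat (t - 3) (wadd m S (b₃ - b₂)) (suf (t - 3) T))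
        (cat (t - 3) A (suf (t - 3) B)) = D t T B := by
  -- power identities
  have h8N : (2:ℤ)^t = 8 * 2^(t-3) := by
    rw [show t = 3 + (t-3) by omega, pow_add]; norm_num
  have h2MZ : (2:ℤ)^(m+t-3) = 2^m * 2^(t-3) := by
    rw [← pow_add]; congr 1; omega
  have h2m8 : (2:ℤ)^m = 8 * 2^(m-3) := by
    rw [show m = 3 + (m-3) by omega, pow_add]; norm_num
  have hNposZ : (0:ℤ) < 2^(t-3) := by positivity
  have hNpos : 0 < 2^(t-3) := Nat.pow_pos (by norm_num)
  -- extract d, e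
  obtain ⟨d, hdabs, hddvd⟩ := D_le_one (by omega) hS hA hSA
  obtain ⟨e, heabs, hedvd⟩ := D_le_one (by omega) hT hB hTB
  have hDe : D t T B = |e| := D_eq_abs (by omega) hT hB heabs hedvd
  rw [hDe]
  -- wadd facts
  have hwnn : (0:ℤ) ≤ ((S:ℤ) + (b₃ - b₂)) % 2^m := Int.emod_nonneg _ (by positivity)
  have hwZ : ((wadd m S (b₃ - b₂) : ℕ) : ℤ) = ((S:ℤ) + (b₃ - b₂)) % 2^m :=
    Int.toNat_of_nonneg hwnn
  have hwlt : ((wadd m S (b₃ - b₂) : ℕ) : ℤ) < 2^m := by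
    rw [hwZ]; exact Int.emod_lt_of_pos _ (by positivity)
  have hwltN : wadd m S (b₃ - b₂) < 2^m := by exact_mod_cast hwlt
  have hwdvd : (2^m:ℤ) ∣ ((wadd m S (b₃ - b₂) : ℕ) : ℤ) - ((S:ℤ) + b₃ - b₂) :=
    ⟨-(((S:ℤ) + (b₃ - b₂)) / 2^m), by rw [hwZ, Int.emod_def]; ring⟩
  -- h₂ as integer divisibility
  have h₂Z : (8:ℤ) ∣ ((pre t 3 T : ℤ) + b₂ - (pre t 3 B : ℤ)) := by
    have h1 := congrArg (Nat.cast (R := ℤ)) h₂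
    rw [wadd, Int.toNat_of_nonneg (Int.emod_nonneg _ (by positivity))] at h1
    norm_num at h1
    omega
  have h₃Z : (8:ℤ) ∣ ((S:ℤ) + b₃ - (pre t 3 B : ℤ)) := by
    have h1 := congrArg (Nat.cast (R := ℤ)) h₃
    rw [wadd, Int.toNat_of_nonneg (Int.emod_nonneg _ (by positivity))] at h1
    simp only [suf] at h1
    push_cast at h1
    norm_num at h1
    omega
  have hABZ : (A:ℤ) % 8 = (pre t 3 B : ℤ) := by
    have h1 := congrArg (Nat.cast (R := ℤ)) hAB
    simp only [suf] at h1
    push_cast at h1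
    exact h1
  -- b₃ = -d
  have hd8 : (8:ℤ) ∣ (S:ℤ) - A - d := by
    obtain ⟨q, hq⟩ := hddvd
    exact ⟨2^(m-3) * q, by rw [hq, h2m8]; ring⟩
  have hb₃d : b₃ = -d := by
    have h1 := abs_le.mp hdabs
    have h2 := abs_le.mp hb₃
    omega
  -- split T and B
  have hsplitT : (2:ℤ)^(t-3) * (pre t 3 T : ℤ) + ((T % 2^(t-3) : ℕ) : ℤ) = T := by
    have := congrArg (Nat.cast (R := ℤ)) (Nat.div_add_mod T (2^(t-3)))
    push_cast at this
    simpa [pre] using this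
  have hsplitB : (2:ℤ)^(t-3) * (pre t 3 B : ℤ) + ((B % 2^(t-3) : ℕ) : ℤ) = B := by
    have := congrArg (Nat.cast (R := ℤ)) (Nat.div_add_mod B (2^(t-3)))
    push_cast at this
    simpa [pre] using this
  -- the key cancellation
  obtain ⟨u, hu⟩ := h₂Z
  obtain ⟨v, hv⟩ := hedvd
  have hv' : (T:ℤ) - B - e = 8 * 2^(t-3) * v := by rw [h8N] at hv; linarith
  have key : ((T % 2^(t-3) : ℕ) : ℤ) - ((B % 2^(t-3) : ℕ) : ℤ) - e - b₂ * 2^(t-3)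
      = 8 * 2^(t-3) * (v - u) := by
    linear_combination hv' + hsplitT - hsplitB - (2:ℤ)^(t-3) * hu
  have hsTlt : ((T % 2^(t-3) : ℕ) : ℤ) < 2^(t-3) := by exact_mod_cast Nat.mod_lt T hNpos
  have hsBlt : ((B % 2^(t-3) : ℕ) : ℤ) < 2^(t-3) := by exact_mod_cast Nat.mod_lt B hNpos
  have hsT0 : (0:ℤ) ≤ ((T % 2^(t-3) : ℕ) : ℤ) := Int.natCast_nonneg _
  have hsB0 : (0:ℤ) ≤ ((B % 2^(t-3) : ℕ) : ℤ) := Int.natCast_nonneg _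
  have he' := abs_le.mp heabs
  have hb₂' := abs_le.mp hb₂
  have hbN1 : b₂ * 2^(t-3) ≤ 1 * 2^(t-3) :=
    mul_le_mul_of_nonneg_right hb₂'.2 (le_of_lt hNposZ)
  have hbN2 : (-1) * 2^(t-3) ≤ b₂ * 2^(t-3) :=
    mul_le_mul_of_nonneg_right hb₂'.1 (le_of_lt hNposZ)
  have hvu : v - u = 0 := by
    rcases lt_trichotomy (v - u) 0 with h|h|h
    · exfalso
      have h5 : 8 * 2^(t-3) * (v - u) ≤ 8 * 2^(t-3) * (-1) :=
        mul_le_mul_of_nonneg_left (by omega) (by positivity)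
      linarith
    · exact h
    · exfalso
      have h5 : 8 * 2^(t-3) * (1:ℤ) ≤ 8 * 2^(t-3) * (v - u) :=
        mul_le_mul_of_nonneg_left (by omega) (by positivity)
      linarith
  have hX : ((T % 2^(t-3) : ℕ) : ℤ) - ((B % 2^(t-3) : ℕ) : ℤ) - e = b₂ * 2^(t-3) := by
    rw [hvu] at key; linarith
  -- bounds for the catenations
  have hS'lt : cat (t-3) (wadd m S (b₃ - b₂)) (suf (t-3) T) < 2^(m+t-3) := by
    simp only [cat, suf]
    rw [show m + t - 3 = m + (t-3) by omega]
    exact cat_lt hwltN (Nat.mod_lt T hNpos)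
  have hA'lt : cat (t-3) A (suf (t-3) B) < 2^(m+t-3) := by
    simp only [cat, suf]
    rw [show m + t - 3 = m + (t-3) by omega]
    exact cat_lt hA (Nat.mod_lt B hNpos)
  apply D_eq_abs (by omega) hS'lt hA'lt heabs
  -- final divisibility
  obtain ⟨q, hq⟩ := hddvd
  obtain ⟨q', hq'⟩ := hwdvd
  refine ⟨q + q', ?_⟩
  have hc1 : ((cat (t-3) (wadd m S (b₃ - b₂)) (suf (t-3) T) : ℕ) : ℤ)
      = ((wadd m S (b₃ - b₂) : ℕ) : ℤ) * 2^(t-3) + ((T % 2^(t-3) : ℕ) : ℤ) := by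
    simp only [cat, suf]; push_cast; ring
  have hc2 : ((cat (t-3) A (suf (t-3) B) : ℕ) : ℤ)
      = (A:ℤ) * 2^(t-3) + ((B % 2^(t-3) : ℕ) : ℤ) := by
    simp only [cat, suf]; push_cast; ring
  rw [hc1, hc2, h2MZ]
  linear_combination (2:ℤ)^(t-3) * hq + (2:ℤ)^(t-3) * hq' + hX + (2:ℤ)^(t-3) * hb₃d
end
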